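/- arXiv:math/0511013 — 11 statements merged into one kernel-verified Lean document; each statement's English description precedes it below -/
import Mathlib

section
/- Let V be a finite-dimensional real vector space, π a skew bivector (π♯ : V* → V with β(π♯α) = -α(π♯β)), σ a skew 2-form (σ♭ : V → V* with (σ♭X)(Y) = -(σ♭Y)(X)), and A : V → V linear. Define Φ(X,α) = (AX + π♯α, σ♭X - α∘A) on V ⊕ V*. Then Φ² = εId (ε ∈ ℝ) if and only if: (i) A² = εId - π♯∘σ♭; (ii) π is compatible with A, i.e. (α∘A)(π♯β) = α(π♯(β∘A)) for all α,β ∈ V*; and (iii) σ is compatible with A, i.e. σ(AX,Y) = σ(X,AY) for all X,Y ∈ V. -/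
open Module

/-- For `Φ(X,α) = (AX + π♯α, σ♭X - α∘A)` with `π`, `σ` skew, the condition
`Φ² = ε Id` is equivalent to `A² = εId - π♯∘σ♭` together with the
compatibility of `π` and `σ` with `A`. -/
theorem stmt_2 (V : Type*) [AddCommGroup V] [Module ℝ V] [FiniteDimensional ℝ V]
    (A : V →ₗ[ℝ] V) (πs : Dual ℝ V →ₗ[ℝ] V) (σb : V →ₗ[ℝ] Dual ℝ V)
    (hπ : ∀ α β : Dual ℝ V, β (πs α) = -α (πs β))
    (hσ : ∀ X Y : V, σb X Y = -σb Y X)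
    (ε : ℝ)
    (Φ : (V × Dual ℝ V) →ₗ[ℝ] (V × Dual ℝ V))
    (hΦ : ∀ (X : V) (α : Dual ℝ V),
      Φ (X, α) = (A X + πs α, σb X - A.dualMap α)) :
    (∀ u, Φ (Φ u) = ε • u) ↔
      ((∀ X : V, A (A X) = ε • X - πs (σb X)) ∧
       (∀ α β : Dual ℝ V, (A.dualMap α) (πs β) = α (πs (A.dualMap β))) ∧
       (∀ X Y : V, σb (A X) Y = σb X (A Y))) := by
  have comp : ∀ (X : V) (α : Dual ℝ V),
      Φ (Φ (X, α)) = (A (A X) + A (πs α) + (πs (σb X) - πs (A.dualMap α)),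
        σb (A X) + σb (πs α) - (A.dualMap (σb X) - A.dualMap (A.dualMap α))) := by
    intro X α
    rw [hΦ, hΦ]
    simp [map_add, map_sub]
  constructor
  · intro h
    have h1 : ∀ X : V, A (A X) = ε • X - πs (σb X) := by
      intro X
      have := h (X, 0)
      rw [comp] at this
      simp [Prod.ext_iff] at this
      have := this.1
      linear_combination (norm := module) this
    refine ⟨h1, ?_, ?_⟩
    · intro α β
      have := h (0, β)
      rw [comp] at this
      simp [Prod.ext_iff] at this
      have h2 : A (πs β) - πs (A.dualMap β) = 0 := by
        have := this.1
        linear_combination (norm := module) this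
      simp [LinearMap.dualMap_apply, sub_eq_zero.mp h2]
    · intro X Y
      have := h (X, 0)
      rw [comp] at this
      simp [Prod.ext_iff] at this
      have h3 : σb (A X) = A.dualMap (σb X) := by
        have := this.2
        linear_combination (norm := module) this
      calc σb (A X) Y = (A.dualMap (σb X)) Y := by rw [h3]
        _ = σb X (A Y) := rfl
  · rintro ⟨h1, h2, h3⟩ ⟨X, α⟩
    rw [comp]
    have hAπ : ∀ β, A (πs β) = πs (A.dualMap β) := by
      intro β
      have : ∀ γ : Dual ℝ V, γ (A (πs β) - πs (A.dualMap β)) = 0 := by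
        intro γ
        have := h2 γ β
        simp only [LinearMap.dualMap_apply] at this
        simp [map_sub, this]
      have := (Module.forall_dual_apply_eq_zero_iff ℝ _).mp this
      linear_combination (norm := module) this
    have hσA : ∀ Z, σb (A Z) = A.dualMap (σb Z) := by
      intro Z
      ext Y
      exact h3 Z Y
    have hsnd : σb (A X) + σb (πs α) - (A.dualMap (σb X) - A.dualMap (A.dualMap α))
        = ε • α := by
      ext Y
      have e1 : σb (πs α) Y = α (πs (σb Y)) := by
        rw [hσ, hπ α (σb Y)]; ring
      have e2 : (A.dualMap (A.dualMap α)) Y = α (A (A Y)) := rfl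
      have e3 : α (A (A Y)) = ε * α Y - α (πs (σb Y)) := by
        rw [h1 Y]; simp [map_sub, map_smul]
      simp only [LinearMap.sub_apply, LinearMap.add_apply, LinearMap.smul_apply,
        hσA X, e1, e2, e3, smul_eq_mul]
      ring
    have hfst : A (A X) + A (πs α) + (πs (σb X) - πs (A.dualMap α)) = ε • X := by
      rw [h1, hAπ]
      module
    rw [hfst, hsnd]
    rfl
end

section
/- Let V be a finite-dimensional real vector space with a generalized almost complex structure, i.e. a g-skew-symmetric linear map Φ : V ⊕ V* → V ⊕ V* with Φ² = -Id, where g is the canonical neutral pairing. Then the dimension of V is even. -/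
open Module Matrix

/-- The canonical neutral pairing on `V ⊕ V*`. -/
noncomputable def bigPairing (V : Type*) [AddCommGroup V] [Module ℝ V]
    (u v : V × Module.Dual ℝ V) : ℝ :=
  (u.2 v.1 + v.2 u.1) / 2

/-- A real vector space with a complex structure has even dimension. -/
lemma even_finrank_of_complexStructure (W : Type*) [AddCommGroup W] [Module ℝ W]
    (J : W →ₗ[ℝ] W) (hJ : J * J = -1) : Even (finrank ℝ W) := by
  let φ : ℂ →ₐ[ℝ] (Module.End ℝ W) := Complex.liftAux J hJ
  letI : Module ℂ W := Module.compHom W (φ.toRingHom : ℂ →+* Module.End ℝ W)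
  haveI : IsScalarTower ℝ ℂ W := by
    refine ⟨fun r z w => ?_⟩
    show φ (r • z) w = r • (φ z w)
    rw [_root_.map_smul]
    rfl
  have h := Module.finrank_mul_finrank ℝ ℂ W
  rw [Complex.finrank_real_complex] at h
  exact ⟨finrank ℂ W, by omega⟩

/-- A nondegenerate alternating bilinear form forces even dimension. -/
lemma even_finrank_of_nondeg_alt (W : Type*) [AddCommGroup W] [Module ℝ W]
    [FiniteDimensional ℝ W] (B : LinearMap.BilinForm ℝ W)
    (halt : ∀ x y, B x y = -B y x) (hnd : B.Nondegenerate) :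
    Even (finrank ℝ W) := by
  classical
  let b := finBasis ℝ W
  set n := finrank ℝ W
  let M := LinearMap.BilinForm.toMatrix b B
  have hdet : M.det ≠ 0 := (LinearMap.BilinForm.nondegenerate_iff_det_ne_zero b).mp hnd
  have hMt : Mᵀ = -M := by
    ext i j
    simp only [Matrix.transpose_apply, Matrix.neg_apply, M, LinearMap.BilinForm.toMatrix_apply]
    rw [halt (b i) (b j), neg_neg]
  have h1 : M.det = (-1 : ℝ) ^ n * M.det := by
    conv_lhs => rw [← Matrix.det_transpose M, hMt]
    rw [Matrix.det_neg]
    simp [Fintype.card_fin]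
  have h2 : (-1 : ℝ) ^ n = 1 := by
    have h3 : (-1 : ℝ) ^ n * M.det = 1 * M.det := by linarith
    exact mul_right_cancel₀ hdet h3
  exact (neg_one_pow_eq_one_iff_even (by norm_num : (-1 : ℝ) ≠ 1)).mp h2

/-- If `V` carries a generalized almost complex structure, i.e. a
`g`-skew-symmetric `Φ : V ⊕ V* → V ⊕ V*` with `Φ² = -Id`, then `dim V` is even. -/
theorem stmt_3 (V : Type*) [AddCommGroup V] [Module ℝ V] [FiniteDimensional ℝ V]
    (Φ : (V × Dual ℝ V) →ₗ[ℝ] (V × Dual ℝ V))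
    (hskew : ∀ u v, bigPairing V u (Φ v) + bigPairing V (Φ u) v = 0)
    (hsq : ∀ u, Φ (Φ u) = -u) :
    Even (finrank ℝ V) := by
  classical
  -- components of Φ on V
  let A : V →ₗ[ℝ] V :=
    (LinearMap.fst ℝ V (Dual ℝ V)).comp (Φ.comp (LinearMap.inl ℝ V (Dual ℝ V)))
  let σ : V →ₗ[ℝ] Dual ℝ V :=
    (LinearMap.snd ℝ V (Dual ℝ V)).comp (Φ.comp (LinearMap.inl ℝ V (Dual ℝ V)))
  have hA : ∀ X : V, Φ (X, 0) = (A X, σ X) := fun X => rfl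
  -- σ is skew
  have hσskew : ∀ X Y : V, σ X Y = -σ Y X := by
    intro X Y
    have h := hskew (X, 0) (Y, 0)
    simp only [bigPairing, hA] at h
    simp only [LinearMap.zero_apply] at h
    linarith
  -- on ker σ, A is a complex structure
  have hker : ∀ X : V, σ X = 0 → (A (A X) = -X ∧ σ (A X) = 0) := by
    intro X hX
    have h := hsq (X, 0)
    rw [hA X, hX, hA (A X)] at h
    have h1 : A (A X) = -X := congrArg Prod.fst h
    have h2 : σ (A X) = -0 := congrArg Prod.snd h
    rw [neg_zero] at h2
    exact ⟨h1, h2⟩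
  set K := LinearMap.ker σ with hK
  have hmaps : ∀ x ∈ K, A x ∈ K := fun x hx => (hker x hx).2
  let J : K →ₗ[ℝ] K := A.restrict hmaps
  have hJ : J * J = -1 := by
    ext ⟨x, hx⟩
    have := (hker x hx).1
    simpa [J, LinearMap.restrict_apply, Subtype.ext_iff] using this
  have hEvenK : Even (finrank ℝ K) := even_finrank_of_complexStructure K J hJ
  -- complement of K
  obtain ⟨W, hW⟩ := Submodule.exists_isCompl K
  -- the form on W
  let B : LinearMap.BilinForm ℝ W :=
    LinearMap.mk₂ ℝ (fun x y : W => σ x y)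
      (fun x x' y => by simp) (fun c x y => by simp)
      (fun x y y' => by simp) (fun c x y => by simp)
  have hBapp : ∀ x y : W, B x y = σ x y := fun x y => rfl
  have hBalt : ∀ x y : W, B x y = -B y x := fun x y => by
    rw [hBapp, hBapp]; exact hσskew x y
  have hBnd : B.Nondegenerate := by
    refine (LinearMap.IsRefl.nondegenerate_iff_separatingLeft (fun x y h => by rw [hBalt y x, h, neg_zero])).mpr ?_
    intro x hx
    have hσx : σ (x : V) = 0 := by
      ext v
      have hv : (v : V) ∈ K ⊔ W := by rw [hW.sup_eq_top]; trivial
      obtain ⟨k, hk, w, hw, rfl⟩ := Submodule.mem_sup.mp hv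
      have h1 : σ (x : V) k = 0 := by
        rw [hσskew]
        rw [hK, LinearMap.mem_ker] at hk
        simp [hk]
      have h2 : σ (x : V) w = 0 := hx ⟨w, hw⟩
      simp [h1, h2]
    have hxK : (x : V) ∈ K := hσx
    have : (x : V) ∈ K ⊓ W := ⟨hxK, x.2⟩
    rw [hW.inf_eq_bot] at this
    exact Subtype.ext this
  have hEvenW : Even (finrank ℝ W) := even_finrank_of_nondeg_alt W B hBalt hBnd
  have hsum : finrank ℝ K + finrank ℝ W = finrank ℝ V :=
    Submodule.finrank_add_eq_of_isCompl hW
  rw [← hsum]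
  exact hEvenK.add hEvenW
end

section
/- Let V be a finite-dimensional real vector space and Φ a g-skew-symmetric endomorphism of V ⊕ V* with Φ² = 0 and im Φ = ker Φ (generalized tangent structure). Then dim V is even. (Sketch: for any complement D of im Φ that is maximally g-isotropic, the 2-form ϖ(Z₁,Z₂) = g(ΦZ₁,Z₂) on D is nondegenerate and skew, so dim D = dim V is even.) -/
open Module

lemma even_finrank_of_alt_nondeg {W : Type*} [AddCommGroup W] [Module ℝ W]
    [FiniteDimensional ℝ W] (B : LinearMap.BilinForm ℝ W)
    (halt : ∀ x, B x x = 0) (hnd : B.Nondegenerate) : Even (finrank ℝ W) := by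
  set n := finrank ℝ W with hn
  let b : Basis (Fin n) ℝ W := finBasis ℝ W
  set M : Matrix (Fin n) (Fin n) ℝ := LinearMap.BilinForm.toMatrix b B with hM
  have hdet : M.det ≠ 0 := (LinearMap.BilinForm.nondegenerate_iff_det_ne_zero b).mp hnd
  have hskew : M.transpose = -M := by
    ext i j
    have h := halt (b i + b j)
    simp only [map_add, LinearMap.add_apply, halt] at h
    have hji : B (b j) (b i) = -(B (b i) (b j)) := by linarith
    simp [hM, LinearMap.BilinForm.toMatrix_apply, Matrix.transpose_apply, hji]
  by_contra hodd
  have hneg : M.det = -M.det := by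
    calc M.det = M.transpose.det := (Matrix.det_transpose M).symm
    _ = (-M).det := by rw [hskew]
    _ = (-1 : ℝ) ^ n * M.det := by rw [Matrix.det_neg]; simp
    _ = -M.det := by
        rw [(Nat.not_even_iff_odd.mp hodd).neg_one_pow]; ring
  have : M.det = 0 := by linarith
  exact hdet this

/-- For a generalized tangent structure `Φ` (`g`-skew, `Φ² = 0`,
`im Φ = ker Φ`), the dimension of `V` is even. -/
theorem stmt_7 (V : Type*) [AddCommGroup V] [Module ℝ V] [FiniteDimensional ℝ V]
    (Φ : (V × Dual ℝ V) →ₗ[ℝ] (V × Dual ℝ V))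
    (hskew : ∀ u v, bigPairing V u (Φ v) + bigPairing V (Φ u) v = 0)
    (hsq : ∀ u, Φ (Φ u) = 0)
    (hrk : LinearMap.range Φ = LinearMap.ker Φ) :
    Even (finrank ℝ V) := by
  classical
  -- the pairing as a bilinear form
  let g : LinearMap.BilinForm ℝ (V × Dual ℝ V) := LinearMap.mk₂ ℝ (bigPairing V)
    (by intro u v w; simp [bigPairing]; ring)
    (by intro c u v; simp [bigPairing]; ring)
    (by intro u v w; simp [bigPairing]; ring)
    (by intro c u v; simp [bigPairing]; ring)
  have hg_apply : ∀ u v : V × Dual ℝ V, g u v = bigPairing V u v := fun u v => rfl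
  have hg_symm : ∀ u v : V × Dual ℝ V, g u v = g v u := by
    intro u v; simp [hg_apply, bigPairing]; ring
  -- nondegeneracy of g
  have hg_nd : ∀ u : V × Dual ℝ V, (∀ v : V × Dual ℝ V, g u v = 0) → u = 0 := by
    intro u hu
    have h1 : u.2 = 0 := by
      ext y
      have := hu (y, 0)
      simp [hg_apply, bigPairing] at this
      simpa using this
    have h2 : u.1 = 0 := by
      rw [← Module.forall_dual_apply_eq_zero_iff ℝ u.1]
      intro φ
      have := hu (0, φ)
      simp [hg_apply, bigPairing] at this
      simpa using this
    exact Prod.ext h2 h1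
  -- the 2-form ω(u,v) = g(Φu, v)
  let B : LinearMap.BilinForm ℝ (V × Dual ℝ V) := g.compLeft Φ
  have hB_apply : ∀ u v : V × Dual ℝ V, B u v = g (Φ u) v := fun u v => rfl
  have hB_alt : ∀ u, B u u = 0 := by
    intro u
    have := hskew u u
    have hsymm := hg_symm u (Φ u)
    have hgoal : B u u = bigPairing V (Φ u) u := rfl
    rw [hgoal]
    rw [hg_apply, hg_apply] at hsymm
    linarith
  -- kernel K and a complement D
  set K := LinearMap.ker Φ with hK
  obtain ⟨D, hD⟩ := Submodule.exists_isCompl K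
  -- g vanishes on (range Φ) × K
  have hiso : ∀ u : V × Dual ℝ V, ∀ k ∈ K, g (Φ u) k = 0 := by
    intro u k hk
    have : k ∈ LinearMap.range Φ := hrk ▸ hk
    obtain ⟨w, rfl⟩ := this
    have h1 := hskew u (Φ w)
    have : Φ (Φ w) = 0 := hsq w
    rw [this] at h1
    simp [hg_apply] at h1 ⊢
    have : bigPairing V u 0 = 0 := by simp [bigPairing]
    linarith [h1, this]
  -- B restricted to D is nondegenerate
  have hBD_nd : (B.restrict D).Nondegenerate := by
    suffices hL : LinearMap.SeparatingLeft (B.restrict D) by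
      refine ⟨hL, fun y hy => hL y fun x => ?_⟩
      have h := hB_alt (x.1 + y.1)
      simp only [map_add, LinearMap.add_apply, hB_alt] at h
      have := hy x
      change B x.1 y.1 = 0 at this
      change B y.1 x.1 = 0
      linarith
    intro ⟨z, hz⟩ h
    have hall : ∀ v : V × Dual ℝ V, g (Φ z) v = 0 := by
      intro v
      obtain ⟨d, k, hd, hk, hdk⟩ : ∃ d k, d ∈ D ∧ k ∈ K ∧ d + k = v := by
        have : v ∈ D ⊔ K := by rw [sup_comm, hD.sup_eq_top]; trivial
        obtain ⟨d, hd, k, hk, h⟩ := Submodule.mem_sup.mp this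
        exact ⟨d, k, hd, hk, h⟩
      have h1 : g (Φ z) d = 0 := h ⟨d, hd⟩
      have h2 : g (Φ z) k = 0 := hiso z k hk
      rw [← hdk, map_add, h1, h2, add_zero]
    have hΦz : Φ z = 0 := hg_nd _ hall
    have : z ∈ K := hΦz
    have : z ∈ K ⊓ D := ⟨this, hz⟩
    rw [hD.inf_eq_bot] at this
    exact Subtype.ext this
  have hBD_alt : ∀ x : D, (B.restrict D) x x = 0 := fun ⟨z, _⟩ => hB_alt z
  have heven : Even (finrank ℝ D) := even_finrank_of_alt_nondeg (W := D) _ hBD_alt hBD_nd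
  -- dimension count: finrank D = finrank V
  have hW : finrank ℝ (V × Dual ℝ V) = 2 * finrank ℝ V := by
    simp [Module.finrank_prod, Subspace.dual_finrank_eq]
    ring
  have hrank : finrank ℝ (LinearMap.range Φ) + finrank ℝ K = finrank ℝ (V × Dual ℝ V) :=
    LinearMap.finrank_range_add_finrank_ker Φ
  rw [hrk] at hrank
  have hcompl : finrank ℝ K + finrank ℝ D = finrank ℝ (V × Dual ℝ V) :=
    Submodule.finrank_add_eq_of_isCompl hD
  have hDV : finrank ℝ D = finrank ℝ V := by omega
  rwa [hDV] at heven
end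

section
/- Let V be a finite-dimensional real vector space, Φ a g-skew-symmetric endomorphism of V ⊕ V* with components (A, π, σ) (i.e. Φ(X,α) = (AX + π♯α, σ♭X - α∘A)), and B a skew 2-form with gauge transformation 𝓑(X,α) = (X, α + B♭X). Then 𝓑⁻¹ ∘ Φ ∘ 𝓑 is again g-skew-symmetric with components A' = A + π♯∘B♭, the same bivector π, and the 2-form σ' given by σ'(X,Y) = σ(X,Y) + π(B♭X, B♭Y) - B(AX,Y) - B(X,AY). -/
open Module

/-- The gauge transform `𝓑⁻¹ ∘ Φ ∘ 𝓑` of a `g`-skew endomorphism `Φ` with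
components `(A,π,σ)` by a skew 2-form `B` is again `g`-skew, with components
`A' = A + π♯∘B♭`, the same `π`, and
`σ'(X,Y) = σ(X,Y) + π(B♭X,B♭Y) - B(AX,Y) - B(X,AY)`. -/
theorem stmt_9 (V : Type*) [AddCommGroup V] [Module ℝ V] [FiniteDimensional ℝ V]
    (A : V →ₗ[ℝ] V) (πs : Dual ℝ V →ₗ[ℝ] V) (σb : V →ₗ[ℝ] Dual ℝ V)
    (hπ : ∀ α β : Dual ℝ V, β (πs α) = -α (πs β))
    (hσ : ∀ X Y : V, σb X Y = -σb Y X)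
    (Φ : (V × Dual ℝ V) →ₗ[ℝ] (V × Dual ℝ V))
    (hΦ : ∀ (X : V) (α : Dual ℝ V),
      Φ (X, α) = (A X + πs α, σb X - A.dualMap α))
    (Bb : V →ₗ[ℝ] Dual ℝ V)
    (hB : ∀ X Y : V, Bb X Y = -Bb Y X)
    (G Ginv : (V × Dual ℝ V) →ₗ[ℝ] (V × Dual ℝ V))
    (hG : ∀ (X : V) (α : Dual ℝ V), G (X, α) = (X, α + Bb X))
    (hGinv : ∀ (X : V) (α : Dual ℝ V), Ginv (X, α) = (X, α - Bb X)) :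
    (∀ u v, bigPairing V u ((Ginv ∘ₗ Φ ∘ₗ G) v)
        + bigPairing V ((Ginv ∘ₗ Φ ∘ₗ G) u) v = 0) ∧
    (∀ (X : V) (α : Dual ℝ V),
      ((Ginv ∘ₗ Φ ∘ₗ G) (X, α)).1 = A X + πs (Bb X) + πs α ∧
      ∀ Y : V, ((Ginv ∘ₗ Φ ∘ₗ G) (X, α)).2 Y =
        (σb X Y + Bb Y (πs (Bb X)) - Bb (A X) Y - Bb X (A Y))
          - α (A Y + πs (Bb Y))) := by
  have key : ∀ (X : V) (α : Dual ℝ V), (Ginv ∘ₗ Φ ∘ₗ G) (X, α)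
      = (A X + πs (Bb X) + πs α,
         σb X - A.dualMap (α + Bb X) - Bb (A X + πs (Bb X) + πs α)) := by
    intro X α
    rw [LinearMap.comp_apply, LinearMap.comp_apply, hG, hΦ]
    rw [hGinv]
    have h1 : A X + πs (α + Bb X) = A X + πs (Bb X) + πs α := by
      rw [map_add]; abel
    rw [h1]
  refine ⟨?_, ?_⟩
  · rintro ⟨X, α⟩ ⟨Y, β⟩
    rw [key, key]
    simp only [bigPairing, map_add, LinearMap.sub_apply, LinearMap.add_apply,
      LinearMap.dualMap_apply, map_sub]
    have e1 := hπ α β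
    have e2 := hσ X Y
    have e3 := hB (A X) Y
    have e4 := hB (A Y) X
    have e5 : Bb (πs α) Y = α (πs (Bb Y)) := by
      rw [hB (πs α) Y, hπ α (Bb Y)]; ring
    have e6 : Bb (πs β) X = β (πs (Bb X)) := by
      rw [hB (πs β) X, hπ β (Bb X)]; ring
    have e7 : Bb (πs (Bb X)) Y = Bb X (πs (Bb Y)) := by
      rw [hB (πs (Bb X)) Y, hπ (Bb X) (Bb Y)]; ring
    have e8 : Bb (πs (Bb Y)) X = Bb Y (πs (Bb X)) := by
      rw [hB (πs (Bb Y)) X, hπ (Bb Y) (Bb X)]; ring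
    have e9 := hπ (Bb X) (Bb Y)
    linarith
  · intro X α
    rw [key]
    refine ⟨rfl, fun Y => ?_⟩
    simp only [map_add, LinearMap.sub_apply, LinearMap.add_apply,
      LinearMap.dualMap_apply, map_sub]
    have e5 : Bb (πs α) Y = α (πs (Bb Y)) := by
      rw [hB (πs α) Y, hπ α (Bb Y)]; ring
    have e7 : Bb (πs (Bb X)) Y = -Bb Y (πs (Bb X)) := hB _ _
    linarith [hB (A X) Y]
end

section
/- Let V be a finite-dimensional real vector space with a nondegenerate skew 2-form ϖ (ϖ♭ : V → V* an isomorphism), define π♯ = -(ϖ♭)⁻¹, and let A : V → V satisfy ϖ(AX,Y) = ϖ(X,AY). Fix ε ∈ {-1,0,1} and define Φ(X,α) = (AX + π♯α, (ϖ_{A²})♭X - ε ϖ♭X - α∘A), where ϖ_{A²}(X,Y) = ϖ(A²X,Y). Then Φ is g-skew-symmetric and Φ² = εId. -/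
open Module

/-- Given a Hitchin-type pair: a nondegenerate skew 2-form `ϖ` and a
compatible `A`, the map `Φ(X,α) = (AX + π♯α, (ϖ_{A²})♭X - εϖ♭X - α∘A)`
with `π♯ = -(ϖ♭)⁻¹` is `g`-skew-symmetric and satisfies `Φ² = εId`. -/
theorem stmt_10 (V : Type*) [AddCommGroup V] [Module ℝ V] [FiniteDimensional ℝ V]
    (ϖb : V ≃ₗ[ℝ] Dual ℝ V)
    (hϖ : ∀ X Y : V, ϖb X Y = -ϖb Y X)
    (A : V →ₗ[ℝ] V)
    (hA : ∀ X Y : V, ϖb (A X) Y = ϖb X (A Y))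
    (ε : ℝ) (hε : ε = -1 ∨ ε = 0 ∨ ε = 1)
    (Φ : (V × Dual ℝ V) →ₗ[ℝ] (V × Dual ℝ V))
    (hΦ : ∀ (X : V) (α : Dual ℝ V),
      Φ (X, α) = (A X - ϖb.symm α, ϖb (A (A X)) - ε • ϖb X - A.dualMap α)) :
    (∀ u v, bigPairing V u (Φ v) + bigPairing V (Φ u) v = 0) ∧
    (∀ u, Φ (Φ u) = ε • u) := by
  have key : ∀ α : Dual ℝ V, ϖb.symm (A.dualMap α) = A (ϖb.symm α) := by
    intro α
    apply ϖb.injective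
    rw [ϖb.apply_symm_apply]
    ext Y
    rw [show (ϖb (A (ϖb.symm α))) Y = ϖb (ϖb.symm α) (A Y) from hA _ _]
    simp
  constructor
  · rintro ⟨X, α⟩ ⟨Y, β⟩
    simp only [hΦ, bigPairing]
    have h1 : ϖb (A (A X)) Y = - ϖb (A (A Y)) X := by
      rw [hA, hA]; exact hϖ _ _
    have h2 : α (ϖb.symm β) = - β (ϖb.symm α) := by
      have := hϖ (ϖb.symm α) (ϖb.symm β)
      simpa using this
    have h3 : ϖb X Y = - ϖb Y X := hϖ X Y
    simp only [LinearMap.sub_apply, LinearMap.smul_apply, LinearMap.dualMap_apply',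
      smul_eq_mul, map_sub, LinearMap.comp_apply]
    rw [h1, h2, h3]
    ring
  · rintro ⟨X, α⟩
    rw [hΦ, hΦ]
    refine Prod.ext ?_ ?_
    · show A (A X - ϖb.symm α) - ϖb.symm (ϖb (A (A X)) - ε • ϖb X - A.dualMap α)
        = (ε • (X, α)).1
      simp only [map_sub, map_smul, ϖb.symm_apply_apply, key, Prod.smul_fst]
      abel
    · show ϖb (A (A (A X - ϖb.symm α))) - ε • ϖb (A X - ϖb.symm α)
        - A.dualMap (ϖb (A (A X)) - ε • ϖb X - A.dualMap α) = (ε • (X, α)).2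
      ext Y
      simp only [map_sub, map_smul, LinearMap.sub_apply, LinearMap.smul_apply,
        LinearMap.dualMap_apply', Prod.smul_snd, smul_eq_mul, LinearMap.comp_apply,
        ϖb.apply_symm_apply]
      have e1 : ϖb (A (A (ϖb.symm α))) Y = α (A (A Y)) := by
        rw [hA, hA]; simp
      have e2 : ϖb (A (A X)) (A Y) = ϖb (A (A (A X))) Y := (hA _ _).symm
      have e3 : ϖb (A (ϖb.symm α)) Y = α (A Y) := by rw [hA]; simp
      have e4 : ϖb X (A Y) = ϖb (A X) Y := (hA _ _).symm
      rw [e1, e2, e4]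
      ring
end

section
/- Let V be a finite-dimensional real vector space with a nondegenerate skew 2-form σ (so σ♭ : V → V* is an isomorphism), w the inverse bivector (w♯ ∘ σ♭ = -Id), A : V → V with σ(AX,Y) = σ(X,AY), and ε ∈ {-1,0,1}. Then the constraint A² = εId - π♯∘σ♭ (with π skew and compatible with A) determines π uniquely: π♯ = (A² - εId)∘w♯, and the map Φ(X,α) = (AX + (A² - εId)(w♯α), σ♭X - α∘A) satisfies Φ² = εId and is g-skew-symmetric. -/
open Module

/-- For a nondegenerate skew 2-form `σ` with inverse bivector `w`
(`w♯∘σ♭ = -Id`) and a compatible `A`, the constraint `A² = εId - π♯∘σ♭`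
(with `π` skew and compatible with `A`) determines `π` uniquely by
`π♯ = (A² - εId)∘w♯`, and the resulting
`Φ(X,α) = (AX + (A² - εId)(w♯α), σ♭X - α∘A)` is `g`-skew with `Φ² = εId`. -/
theorem stmt_11 (V : Type*) [AddCommGroup V] [Module ℝ V] [FiniteDimensional ℝ V]
    (σb : V ≃ₗ[ℝ] Dual ℝ V)
    (hσ : ∀ X Y : V, σb X Y = -σb Y X)
    (ws : Dual ℝ V →ₗ[ℝ] V)
    (hw : ∀ X : V, ws (σb X) = -X)
    (A : V →ₗ[ℝ] V)
    (hA : ∀ X Y : V, σb (A X) Y = σb X (A Y))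
    (ε : ℝ) (hε : ε = -1 ∨ ε = 0 ∨ ε = 1)
    (Φ : (V × Dual ℝ V) →ₗ[ℝ] (V × Dual ℝ V))
    (hΦ : ∀ (X : V) (α : Dual ℝ V),
      Φ (X, α) = (A X + (A (A (ws α)) - ε • ws α), σb X - A.dualMap α)) :
    (∀ πs' : Dual ℝ V →ₗ[ℝ] V,
      (∀ α β : Dual ℝ V, β (πs' α) = -α (πs' β)) →
      (∀ α β : Dual ℝ V, (A.dualMap α) (πs' β) = α (πs' (A.dualMap β))) →
      (∀ X : V, A (A X) = ε • X - πs' (σb X)) →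
      ∀ α : Dual ℝ V, πs' α = A (A (ws α)) - ε • ws α) ∧
    (∀ u, Φ (Φ u) = ε • u) ∧
    (∀ u v, bigPairing V u (Φ v) + bigPairing V (Φ u) v = 0) := by
  have hσw : ∀ α : Dual ℝ V, σb (ws α) = -α := by
    intro α
    have h := hw (σb.symm α)
    rw [σb.apply_symm_apply] at h
    rw [h, map_neg, σb.apply_symm_apply]
  have hAd : ∀ X : V, A.dualMap (σb X) = σb (A X) := by
    intro X; ext Y
    exact (hA X Y).symm
  have hwA : ∀ α : Dual ℝ V, ws (A.dualMap α) = A (ws α) := by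
    intro α
    obtain ⟨X, rfl⟩ := σb.surjective α
    rw [hAd, hw, hw, map_neg]
  have hskeww : ∀ α β : Dual ℝ V, α (ws β) = -β (ws α) := by
    intro α β
    obtain ⟨X, rfl⟩ := σb.surjective α
    obtain ⟨Y, rfl⟩ := σb.surjective β
    rw [hw, hw]
    simp [hσ X Y]
  have hA2skew : ∀ α β : Dual ℝ V, α (A (A (ws β))) = -β (A (A (ws α))) := by
    intro α β
    rw [← hwA, ← hwA, hskeww]
    simp
  refine ⟨?_, ?_, ?_⟩
  · intro πs' _ _ h3 α
    have h := h3 (ws α)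
    rw [hσw, map_neg] at h
    rw [h]; abel
  · rintro ⟨X, α⟩
    rw [hΦ, hΦ]
    refine Prod.ext ?_ ?_
    · show _ = ε • X
      simp only [map_add, map_sub, map_smul, map_neg, hw, hwA]
      module
    · show _ = ε • α
      simp only [map_add, map_sub, map_smul, map_neg, ← hAd, hσw]
      module
  · rintro ⟨X, α⟩ ⟨Y, β⟩
    rw [hΦ, hΦ]
    simp only [bigPairing, LinearMap.sub_apply, LinearMap.add_apply, map_add, map_sub,
      map_smul, LinearMap.dualMap_apply, smul_eq_mul]
    linear_combination (hσ X Y) / 2 + (hA2skew α β) / 2 - ε / 2 * hskeww α β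
end

section
/- Let (V,σ) be a finite-dimensional symplectic vector space with inverse bivector w (w♯∘σ♭ = -Id), and let W be a skew bivector on V compatible with w in the sense needed below. Define B = -W♯∘σ♭ : V → V and κ♯ = -ε w♯ - W♯∘σ♭∘W♯, and set Φ_W(X,α) = (BX + κ♯α, σ♭X - α∘B). Then Φ_W is g-skew-symmetric and Φ_W² = εId. -/
open Module

/-- On a symplectic vector space `(V,σ)` with inverse bivector `w`
(`w♯∘σ♭ = -Id`) and a skew bivector `W`, the map
`Φ_W(X,α) = (BX + κ♯α, σ♭X - α∘B)` with `B = -W♯∘σ♭` and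
`κ♯ = -εw♯ - W♯∘σ♭∘W♯` is `g`-skew-symmetric and satisfies `Φ_W² = εId`. -/
theorem stmt_12 (V : Type*) [AddCommGroup V] [Module ℝ V] [FiniteDimensional ℝ V]
    (σb : V ≃ₗ[ℝ] Dual ℝ V)
    (hσ : ∀ X Y : V, σb X Y = -σb Y X)
    (ws : Dual ℝ V →ₗ[ℝ] V)
    (hw : ∀ X : V, ws (σb X) = -X)
    (Ws : Dual ℝ V →ₗ[ℝ] V)
    (hW : ∀ α β : Dual ℝ V, β (Ws α) = -α (Ws β))
    (ε : ℝ) (hε : ε = -1 ∨ ε = 0 ∨ ε = 1)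
    (B : V →ₗ[ℝ] V)
    (hB : ∀ X : V, B X = -Ws (σb X))
    (κs : Dual ℝ V →ₗ[ℝ] V)
    (hκ : ∀ α : Dual ℝ V, κs α = -(ε • ws α) - Ws (σb (Ws α)))
    (ΦW : (V × Dual ℝ V) →ₗ[ℝ] (V × Dual ℝ V))
    (hΦ : ∀ (X : V) (α : Dual ℝ V),
      ΦW (X, α) = (B X + κs α, σb X - B.dualMap α)) :
    (∀ u v, bigPairing V u (ΦW v) + bigPairing V (ΦW u) v = 0) ∧
    (∀ u, ΦW (ΦW u) = ε • u) := by
  -- σb ∘ ws = -id on duals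
  have hσws : ∀ α : Dual ℝ V, σb (ws α) = -α := by
    intro α
    have h := hw (σb.symm α)
    rw [σb.apply_symm_apply] at h
    rw [h, map_neg, σb.apply_symm_apply]
  -- ws is skew
  have hwsk : ∀ α β : Dual ℝ V, α (ws β) = -β (ws α) := by
    intro α β
    have h := hσ (ws β) (ws α)
    rw [hσws, hσws] at h
    simpa using h.symm
  -- key pairing identity for σb (Ws γ)
  have key2 : ∀ (γ : Dual ℝ V) (Y : V), σb (Ws γ) Y = γ (Ws (σb Y)) := by
    intro γ Y
    rw [hσ (Ws γ) Y, hW γ (σb Y), neg_neg]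
  -- W♯∘σ♭∘W♯ is skew
  have hWW : ∀ α β : Dual ℝ V, α (Ws (σb (Ws β))) = -β (Ws (σb (Ws α))) := by
    intro α β
    rw [hW (σb (Ws β)) α, hσ (Ws β) (Ws α), hW (σb (Ws α)) β]
  -- B B X
  have hBB : ∀ X : V, B (B X) = Ws (σb (Ws (σb X))) := by
    intro X
    rw [hB (B X), hB X, map_neg, map_neg, neg_neg]
  have hBws : ∀ α : Dual ℝ V, B (ws α) = Ws α := by
    intro α
    rw [hB, hσws, map_neg, neg_neg]
  -- (a)
  have ha : ∀ X : V, B (B X) + κs (σb X) = ε • X := by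
    intro X
    rw [hBB, hκ, hw, smul_neg, neg_neg]
    abel
  -- ws (B* α) = Ws α
  have hws' : ∀ α : Dual ℝ V, ws (B.dualMap α) = Ws α := by
    intro α
    apply σb.injective
    rw [hσws]
    ext Y
    rw [LinearMap.neg_apply, LinearMap.dualMap_apply, key2, hB, map_neg, neg_neg]
  -- Ws (B* α) = - Ws σb Ws α
  have hWs' : ∀ α : Dual ℝ V, Ws (B.dualMap α) = -Ws (σb (Ws α)) := by
    intro α
    apply σb.injective
    rw [map_neg]
    ext Y
    rw [LinearMap.neg_apply, key2, key2, LinearMap.dualMap_apply, hB, key2, map_neg]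
  -- (b)
  have hb : ∀ α : Dual ℝ V, B (κs α) = κs (B.dualMap α) := by
    intro α
    rw [hκ α, hκ (B.dualMap α), hws', hWs']
    rw [map_sub, map_neg, map_smul, hBws, hB (Ws (σb (Ws α)))]
    simp only [map_neg, neg_neg]
  -- (c)
  have hc : ∀ X : V, σb (B X) = B.dualMap (σb X) := by
    intro X
    ext Y
    rw [LinearMap.dualMap_apply, hB X, hB Y, map_neg, LinearMap.neg_apply, key2, map_neg]
  -- (d)
  have hd : ∀ α : Dual ℝ V, σb (κs α) + B.dualMap (B.dualMap α) = ε • α := by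
    intro α
    ext Y
    have hkey : σb (Ws (σb (Ws α))) Y = α (Ws (σb (Ws (σb Y)))) := by
      rw [key2, key2]
    simp only [LinearMap.add_apply, LinearMap.dualMap_apply, hκ, map_sub, map_neg, map_smul,
      hσws, hBB, LinearMap.smul_apply, LinearMap.neg_apply, LinearMap.sub_apply, smul_eq_mul,
      smul_neg, neg_neg, hkey]
    ring
  constructor
  · rintro ⟨X, α⟩ ⟨Y, β⟩
    rw [hΦ, hΦ]
    simp only [bigPairing, map_add, map_sub, map_neg, map_smul, LinearMap.sub_apply,
      LinearMap.add_apply, LinearMap.neg_apply, LinearMap.dualMap_apply, hκ, smul_eq_mul,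
      LinearMap.smul_apply]
    have e1 := hwsk α β
    have e2 := hWW α β
    have e3 := hσ X Y
    have e1' : ε * α (ws β) = -(ε * β (ws α)) := by rw [e1]; ring
    linarith
  · rintro ⟨X, α⟩
    rw [hΦ, hΦ, Prod.smul_mk, Prod.mk.injEq]
    constructor
    · rw [map_add, map_sub, hb, ← ha X]
      abel
    · simp only [map_add, map_sub, hc]
      rw [← hd α]
      abel
end

section
/- Let V be a finite-dimensional real vector space, Φ a g-skew-symmetric endomorphism of V ⊕ V* with Φ² = εId and components (A, π, σ), and suppose the bivector π is zero. If ε = ±1 and the skew 2-form B is defined by B(X,Y) = (ε/2)σ(AX,Y), then σ(X,Y) = B(AX,Y) + B(X,AY) for all X,Y ∈ V; consequently the gauge transform of Φ by B has vanishing 2-form component, i.e. Φ is gauge equivalent to the classical structure (X,α) ↦ (AX, -α∘A). -/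
open Module

/-- If `Φ` has components `(A, 0, σ)` (vanishing bivector), `Φ² = εId` with
`ε = ±1`, and `B(X,Y) = (ε/2)σ(AX,Y)`, then `σ(X,Y) = B(AX,Y) + B(X,AY)`;
consequently the gauge transform of `Φ` by `B` is the classical structure
`(X,α) ↦ (AX, -α∘A)`. -/
theorem stmt_13 (V : Type*) [AddCommGroup V] [Module ℝ V] [FiniteDimensional ℝ V]
    (A : V →ₗ[ℝ] V) (σb : V →ₗ[ℝ] Dual ℝ V)
    (hσ : ∀ X Y : V, σb X Y = -σb Y X)
    (hcompat : ∀ X Y : V, σb (A X) Y = σb X (A Y))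
    (ε : ℝ) (hε : ε = -1 ∨ ε = 1)
    (hA2 : ∀ X : V, A (A X) = ε • X)
    (Φ : (V × Dual ℝ V) →ₗ[ℝ] (V × Dual ℝ V))
    (hΦ : ∀ (X : V) (α : Dual ℝ V), Φ (X, α) = (A X, σb X - A.dualMap α))
    (Bb : V →ₗ[ℝ] Dual ℝ V)
    (hBb : ∀ X : V, Bb X = (ε / 2) • σb (A X))
    (G Ginv : (V × Dual ℝ V) →ₗ[ℝ] (V × Dual ℝ V))
    (hG : ∀ (X : V) (α : Dual ℝ V), G (X, α) = (X, α + Bb X))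
    (hGinv : ∀ (X : V) (α : Dual ℝ V), Ginv (X, α) = (X, α - Bb X)) :
    (∀ X Y : V, σb X Y = Bb (A X) Y + Bb X (A Y)) ∧
    (∀ (X : V) (α : Dual ℝ V), Ginv (Φ (G (X, α))) = (A X, -A.dualMap α)) := by
  have hε2 : ε * ε = 1 := by rcases hε with h | h <;> simp [h]
  have key : ∀ X Y : V, σb X Y = Bb (A X) Y + Bb X (A Y) := by
    intro X Y
    have h1 : Bb (A X) Y = (ε / 2) * σb X (ε • Y) := by
      rw [hBb]
      simp only [LinearMap.smul_apply, smul_eq_mul]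
      rw [show σb (A (A X)) Y = σb X (A (A Y)) from by rw [hcompat, hcompat], hA2]
    have h2 : Bb X (A Y) = (ε / 2) * σb X (ε • Y) := by
      rw [hBb]
      simp only [LinearMap.smul_apply, smul_eq_mul]
      rw [hcompat, hA2]
    rw [h1, h2]
    have : σb X (ε • Y) = ε * σb X Y := by simp [smul_eq_mul]
    rw [this]; rcases hε with h | h <;> rw [h] <;> ring
  refine ⟨key, fun X α => ?_⟩
  rw [hG, hΦ, hGinv]
  refine Prod.ext rfl ?_
  ext Y
  have hd : A.dualMap (Bb X) Y = Bb X (A Y) := rfl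
  simp only [LinearMap.sub_apply, LinearMap.neg_apply, LinearMap.add_apply, map_add,
    LinearMap.dualMap_apply', LinearMap.comp_apply]
  have := key X Y
  linarith [this]
end

section
/- Let V be a finite-dimensional real vector space, Φ a g-skew-symmetric endomorphism of V ⊕ V* with components (A,π,σ) and Φ² = εId, and let N ⊆ V be a subspace satisfying the quasi-invariance conditions: (i) N ∩ π♯(ann N) = 0 (Poisson-Dirac) and (ii) A(N) ⊆ N ⊕ π♯(ann N). If γ ∈ ann N ∩ ker π♯, then γ∘A ∈ ann N. -/
open Module

/-- For `Φ` with components `(A,π,σ)`, `Φ² = εId`, and a quasi-invariant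
subspace `N` (`N ∩ π♯(ann N) = 0` and `A(N) ⊆ N ⊕ π♯(ann N)`), every
`γ ∈ ann N ∩ ker π♯` satisfies `γ∘A ∈ ann N`. -/
theorem stmt_17 (V : Type*) [AddCommGroup V] [Module ℝ V] [FiniteDimensional ℝ V]
    (A : V →ₗ[ℝ] V) (πs : Dual ℝ V →ₗ[ℝ] V) (σb : V →ₗ[ℝ] Dual ℝ V)
    (hπ : ∀ α β : Dual ℝ V, β (πs α) = -α (πs β))
    (hσ : ∀ X Y : V, σb X Y = -σb Y X)
    (ε : ℝ)
    (hA2 : ∀ X : V, A (A X) = ε • X - πs (σb X))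
    (hcπ : ∀ α β : Dual ℝ V, (A.dualMap α) (πs β) = α (πs (A.dualMap β)))
    (hcσ : ∀ X Y : V, σb (A X) Y = σb X (A Y))
    (N : Submodule ℝ V)
    (hPD : N ⊓ N.dualAnnihilator.map πs = ⊥)
    (hAN : ∀ X ∈ N, A X ∈ N ⊔ N.dualAnnihilator.map πs) :
    ∀ γ ∈ N.dualAnnihilator ⊓ LinearMap.ker πs,
      A.dualMap γ ∈ N.dualAnnihilator := by
  intro γ hγ
  obtain ⟨hγN, hγk⟩ := hγ
  have hγk : πs γ = 0 := hγk
  have hγN : ∀ X ∈ N, γ X = 0 := (Submodule.mem_dualAnnihilator γ).mp hγN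
  rw [Submodule.mem_dualAnnihilator]
  intro X hX
  obtain ⟨n, hn, m, hm, hsum⟩ := Submodule.mem_sup.mp (hAN X hX)
  obtain ⟨α, hα, rfl⟩ := Submodule.mem_map.mp hm
  have : A.dualMap γ X = γ (A X) := rfl
  rw [this, ← hsum, map_add, hγN n hn, hπ α γ, hγk, map_zero, neg_zero, add_zero]
end

section
/- Let V be a finite-dimensional real vector space, Φ a g-skew-symmetric endomorphism of V ⊕ V* with components (A,π,σ) and Φ² = εId. Let N ⊆ V be a quasi-invariant subspace: N ∩ π♯(ann N) = 0 and A(N) ⊆ N ⊕ π♯(ann N). Define on N the induced data: A'X = pr_N(AX) (projection along π♯(ann N)), the induced bivector π' on N (determined by the Poisson-Dirac condition), and σ'(X,Y) = σ(X,Y) - π(α_X, α_Y) where AX = A'X + π♯α_X with α_X ∈ ann N (chosen modulo ann N ∩ ker π♯). Then σ' is a well-defined skew 2-form on N: its value does not depend on the choice of representatives α_X, α_Y, and σ'(X,Y) = -σ'(Y,X). -/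
open Module

/-- For `Φ` with components `(A,π,σ)`, `Φ² = εId`, and a quasi-invariant
subspace `N`, the induced 2-form `σ'(X,Y) = σ(X,Y) - π(α_X,α_Y)` (where
`AX = pr_N(AX) + π♯α_X` with `α_X ∈ ann N`) is well defined (independent of
the choice of `α_X`, `α_Y`) and skew-symmetric. -/
theorem stmt_18 (V : Type*) [AddCommGroup V] [Module ℝ V] [FiniteDimensional ℝ V]
    (A : V →ₗ[ℝ] V) (πs : Dual ℝ V →ₗ[ℝ] V) (σb : V →ₗ[ℝ] Dual ℝ V)
    (hπ : ∀ α β : Dual ℝ V, β (πs α) = -α (πs β))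
    (hσ : ∀ X Y : V, σb X Y = -σb Y X)
    (ε : ℝ)
    (hA2 : ∀ X : V, A (A X) = ε • X - πs (σb X))
    (hcπ : ∀ α β : Dual ℝ V, (A.dualMap α) (πs β) = α (πs (A.dualMap β)))
    (hcσ : ∀ X Y : V, σb (A X) Y = σb X (A Y))
    (N : Submodule ℝ V)
    (hPD : N ⊓ N.dualAnnihilator.map πs = ⊥)
    (hAN : ∀ X ∈ N, A X ∈ N ⊔ N.dualAnnihilator.map πs) :
    ∀ X ∈ N, ∀ Y ∈ N,
      ∀ αX ∈ N.dualAnnihilator, ∀ αX' ∈ N.dualAnnihilator,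
      ∀ αY ∈ N.dualAnnihilator, ∀ αY' ∈ N.dualAnnihilator,
      A X - πs αX ∈ N → A X - πs αX' ∈ N →
      A Y - πs αY ∈ N → A Y - πs αY' ∈ N →
      (αY (πs αX) = αY' (πs αX')) ∧
      (σb X Y - αY (πs αX) = -(σb Y X - αX (πs αY))) := by
  intro X hX Y hY αX hαX αX' hαX' αY hαY αY' hαY' h1 h2 h3 h4
  -- key: with fixed Z, two choices give the same πs value
  have key : ∀ Z : V, ∀ β ∈ N.dualAnnihilator, ∀ β' ∈ N.dualAnnihilator,
      A Z - πs β ∈ N → A Z - πs β' ∈ N → πs β = πs β' := by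
    intro Z β hβ β' hβ' hb hb'
    have hmem : πs β - πs β' ∈ N ⊓ N.dualAnnihilator.map πs := by
      constructor
      · have : πs β - πs β' = (A Z - πs β') - (A Z - πs β) := by abel
        rw [this]; exact N.sub_mem hb' hb
      · rw [← map_sub]
        exact Submodule.mem_map_of_mem (N.dualAnnihilator.sub_mem hβ hβ')
    rw [hPD] at hmem
    exact sub_eq_zero.mp (by simpa using hmem)
  have hXX : πs αX = πs αX' := key X αX hαX αX' hαX' h1 h2
  have hYY : πs αY = πs αY' := key Y αY hαY αY' hαY' h3 h4
  constructor
  · rw [hπ αX αY, hYY, hπ αY' αX, hXX, neg_neg]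
  · rw [hσ X Y, hπ αX αY]; ring
end

section
/- Let V be a finite-dimensional real vector space and Φ a g-skew-symmetric endomorphism of V ⊕ V* with Φ² = -Id. Let N ⊆ V be a quasi-invariant subspace (N ∩ π♯(ann N) = 0 and A(N) ⊆ N ⊕ π♯(ann N), where (A,π,σ) are the components of Φ). Let L ⊆ (V ⊕ V*) ⊗ ℂ be the i-eigenspace of Φ and define the pullback ι*L = {(X, ξ|_N) : X ∈ N ⊗ ℂ, ξ ∈ V* ⊗ ℂ, (X,ξ) ∈ L} ⊆ (N ⊕ N*) ⊗ ℂ. Then ι*L ∩ conj(ι*L) = 0. -/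
open Module

/-- Key algebraic step of Theorem 3.1: for a generalized complex structure
`Φ` with components `(A,π,σ)` (`Φ² = -Id`) and a quasi-invariant subspace
`N`, the pullback `ι*L` of the `i`-eigenspace `L` of `Φ` to `(N ⊕ N*) ⊗ ℂ`
meets its complex conjugate only in `0`.  The complexification is modelled
concretely by real and imaginary parts: an element `u + iv` of
`(V ⊕ V*) ⊗ ℂ` is the pair `(u,v)`, `i•(u,v) = (-v,u)`, and conjugation is
`(u,v) ↦ (u,-v)`; thus `((X₁,ξ₁),(X₂,ξ₂)) ∈ L` iff `Φ(X₁,ξ₁) = -(X₂,ξ₂)`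
and `Φ(X₂,ξ₂) = (X₁,ξ₁)`.  An element of `ι*L ∩ conj(ι*L)` is represented
by the data below, and the conclusion says it vanishes. -/
theorem stmt_19 (V : Type*) [AddCommGroup V] [Module ℝ V] [FiniteDimensional ℝ V]
    (A : V →ₗ[ℝ] V) (πs : Dual ℝ V →ₗ[ℝ] V) (σb : V →ₗ[ℝ] Dual ℝ V)
    (hπ : ∀ α β : Dual ℝ V, β (πs α) = -α (πs β))
    (hσ : ∀ X Y : V, σb X Y = -σb Y X)
    (Φ : (V × Dual ℝ V) →ₗ[ℝ] (V × Dual ℝ V))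
    (hΦ : ∀ (X : V) (α : Dual ℝ V),
      Φ (X, α) = (A X + πs α, σb X - A.dualMap α))
    (hsq : ∀ u, Φ (Φ u) = -u)
    (N : Submodule ℝ V)
    (hPD : N ⊓ N.dualAnnihilator.map πs = ⊥)
    (hAN : ∀ X ∈ N, A X ∈ N ⊔ N.dualAnnihilator.map πs)
    -- an element of `ι*L`, with vector parts in `N`:
    (X₁ X₂ : N) (ξ₁ ξ₂ : Dual ℝ V)
    (h₁ : Φ ((X₁ : V), ξ₁) = (-(X₂ : V), -ξ₂))
    (h₂ : Φ ((X₂ : V), ξ₂) = ((X₁ : V), ξ₁))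
    -- whose conjugate `((X₁, ξ₁|N), (-X₂, -ξ₂|N))` also lies in `ι*L`,
    -- via representatives `ζ₁, ζ₂` of the restricted covectors:
    (ζ₁ ζ₂ : Dual ℝ V)
    (h₃ : N.subtype.dualMap ζ₁ = N.subtype.dualMap ξ₁)
    (h₄ : N.subtype.dualMap ζ₂ = -N.subtype.dualMap ξ₂)
    (h₅ : Φ ((X₁ : V), ζ₁) = ((X₂ : V), -ζ₂))
    (h₆ : Φ (-(X₂ : V), ζ₂) = ((X₁ : V), ζ₁)) :
    X₁ = 0 ∧ X₂ = 0 ∧ N.subtype.dualMap ξ₁ = 0 ∧ N.subtype.dualMap ξ₂ = 0 := by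
  rw [hΦ] at h₁ h₂ h₅
  rw [hΦ] at h₆
  obtain ⟨e₁, e₁'⟩ := Prod.ext_iff.mp h₁
  obtain ⟨e₂, e₂'⟩ := Prod.ext_iff.mp h₂
  obtain ⟨e₅, e₅'⟩ := Prod.ext_iff.mp h₅
  obtain ⟨e₆, e₆'⟩ := Prod.ext_iff.mp h₆
  -- values on N
  dsimp only at e₁ e₁' e₂ e₂' e₅ e₅' e₆ e₆'
  have h₃' : ∀ w ∈ N, ζ₁ w = ξ₁ w := fun w hw => LinearMap.congr_fun h₃ ⟨w, hw⟩
  have h₄' : ∀ w ∈ N, ζ₂ w = -ξ₂ w := fun w hw => LinearMap.congr_fun h₄ ⟨w, hw⟩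
  -- X₂ = 0
  have a₁ : ζ₁ - ξ₁ ∈ N.dualAnnihilator := by
    rw [Submodule.mem_dualAnnihilator]
    intro w hw
    simp [h₃' w hw]
  have k₂ : πs (ζ₁ - ξ₁) = (X₂ : V) + (X₂ : V) := by
    have : (A (X₁:V) + πs ζ₁) - (A (X₁:V) + πs ξ₁) = (X₂:V) - (-(X₂:V)) := by
      rw [e₅, e₁]
    rw [map_sub]
    abel_nf at this ⊢
    linear_combination (norm := abel) this
  have hX₂ : X₂ = 0 := by
    have mem : (X₂ : V) + (X₂ : V) ∈ N ⊓ N.dualAnnihilator.map πs :=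
      ⟨N.add_mem X₂.2 X₂.2, ⟨ζ₁ - ξ₁, a₁, k₂⟩⟩
    rw [hPD, Submodule.mem_bot] at mem
    have : (X₂ : V) = 0 := by
      have h2 : (2:ℝ) • (X₂:V) = 0 := by rw [two_smul]; exact mem
      simpa using (smul_eq_zero.mp h2).resolve_left (by norm_num)
    exact Subtype.ext this
  -- X₁ = 0
  have a₂ : ζ₂ + ξ₂ ∈ N.dualAnnihilator := by
    rw [Submodule.mem_dualAnnihilator]
    intro w hw
    simp [h₄' w hw]
  have k₁ : πs (ζ₂ + ξ₂) = (X₁ : V) + (X₁ : V) := by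
    have : (A (-(X₂:V)) + πs ζ₂) + (A (X₂:V) + πs ξ₂) = (X₁:V) + (X₁:V) := by
      rw [e₆, e₂]
    rw [map_add]
    simp only [map_neg] at this
    linear_combination (norm := abel) this
  have hX₁ : X₁ = 0 := by
    have mem : (X₁ : V) + (X₁ : V) ∈ N ⊓ N.dualAnnihilator.map πs :=
      ⟨N.add_mem X₁.2 X₁.2, ⟨ζ₂ + ξ₂, a₂, k₁⟩⟩
    rw [hPD, Submodule.mem_bot] at mem
    have : (X₁ : V) = 0 := by
      have h2 : (2:ℝ) • (X₁:V) = 0 := by rw [two_smul]; exact mem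
      simpa using (smul_eq_zero.mp h2).resolve_left (by norm_num)
    exact Subtype.ext this
  have hv₁ : (X₁ : V) = 0 := by rw [hX₁]; rfl
  have hv₂ : (X₂ : V) = 0 := by rw [hX₂]; rfl
  rw [hv₁] at e₁ e₁' e₅ e₅'
  rw [hv₂] at e₂ e₂' e₆ e₆'
  simp only [map_zero, zero_add, neg_zero, zero_sub, add_zero] at e₁ e₁' e₂ e₂' e₅ e₅' e₆ e₆'
  -- now derive covector facts
  have p₁ : πs ξ₁ = 0 := by simpa [hv₂] using e₁
  have p₂ : πs ξ₂ = 0 := by simpa [hv₁] using e₂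
  have p₅ : πs ζ₁ = 0 := by simpa [hv₂] using e₅
  have p₆ : πs ζ₂ = 0 := by simpa [hv₁] using e₆
  have f₁ : A.dualMap ξ₁ = ξ₂ := by
    have := e₁'; simp only [map_zero, zero_sub, neg_inj] at this; exact this
  have f₂ : ξ₁ = -A.dualMap ξ₂ := by
    have := e₂'; simpa only [map_zero, zero_sub] using this.symm
  have f₆ : ζ₁ = -A.dualMap ζ₂ := by
    have := e₆'; simpa only [neg_zero, map_zero, zero_sub] using this.symm
  -- any covector killed by πs annihilates πs α for α in ann N
  have kill : ∀ (η : Dual ℝ V), πs η = 0 → ∀ α ∈ N.dualAnnihilator, η (πs α) = 0 := by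
    intro η hη α _
    rw [hπ α η, hη, map_zero, neg_zero]
  have hξ₁N : ∀ w ∈ N, ξ₁ w = 0 := by
    intro Y hY
    obtain ⟨m, hm, z, hz, hmz⟩ := Submodule.mem_sup.mp (hAN Y hY)
    obtain ⟨α, hα, rfl⟩ := hz
    have r₁ : ξ₁ Y = -ξ₂ m := by
      rw [f₂]
      simp only [LinearMap.neg_apply, LinearMap.dualMap_apply, ← hmz, map_add,
        kill ξ₂ p₂ α hα, add_zero]
    have r₂ : ξ₁ Y = ξ₂ m := by
      rw [← h₃' Y hY, f₆]
      simp only [LinearMap.neg_apply, LinearMap.dualMap_apply, ← hmz, map_add,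
        kill ζ₂ p₆ α hα, add_zero, h₄' m hm, neg_neg]
    linarith [r₁, r₂]
  have hξ₂N : ∀ w ∈ N, ξ₂ w = 0 := by
    intro Y hY
    obtain ⟨m, hm, z, hz, hmz⟩ := Submodule.mem_sup.mp (hAN Y hY)
    obtain ⟨α, hα, rfl⟩ := hz
    rw [← f₁]
    simp only [LinearMap.dualMap_apply, ← hmz, map_add, kill ξ₁ p₁ α hα, add_zero,
      hξ₁N m hm]
  refine ⟨hX₁, hX₂, ?_, ?_⟩ <;> ext w <;> simp [hξ₁N w.1 w.2, hξ₂N w.1 w.2]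
end
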